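/- For the fuzzy torus: let ω = exp(2πi/N), g the diagonal N×N matrix with g_{kk} = ω^{k−1}, and h the cyclic shift matrix (h_{k,k+1} = 1, h_{N,1} = 1), so hg = ω gh. Define X^1 = (g†+g)/(2√2), X^2 = i(g†−g)/(2√2), X^3 = (h†+h)/(2√2), X^4 = i(h†−h)/(2√2), and ℏ = sin(π/N). Then [X^1, X^2] = 0, [X^3, X^4] = 0, and −ℏ^{-2} ∑_{i,j=1}^4 [X^i, X^j]² = 2·1_N. -/
import Mathlib


open scoped BigOperators Matrix

/-- The clock matrix `g` with `g_{kk} = ω^{k-1}`, `ω = e^{2πi/N}`. -/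
noncomputable def clock (N : ℕ) : Matrix (Fin N) (Fin N) ℂ :=
  Matrix.diagonal fun k => Complex.exp (2 * Real.pi * Complex.I / N) ^ (k : ℕ)

/-- The cyclic shift matrix `h` with `h_{k,k+1} = 1`, `h_{N,1} = 1`. -/
def shift (N : ℕ) : Matrix (Fin N) (Fin N) ℂ :=
  Matrix.of fun k l => if (l : ℕ) = ((k : ℕ) + 1) % N then 1 else 0

set_option maxHeartbeats 3000000 in
/-- Abstract computation of the sum of squared commutators. -/
lemma fuzzy_aux {A : Type} [Ring A] [Algebra ℂ A] (P Q U V : A) (ω s : ℂ)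
    (Z : Fin 4 → A)
    (hZ0 : Z 0 = s • (Q + P)) (hZ1 : Z 1 = (s * Complex.I) • (Q - P))
    (hZ2 : Z 2 = s • (V + U)) (hZ3 : Z 3 = (s * Complex.I) • (V - U))
    (h1 : P * Q = 1) (h2 : Q * P = 1) (h3 : U * V = 1) (h4 : V * U = 1)
    (r1 : U * P = ω • (P * U)) (r2 : U * Q = ω⁻¹ • (Q * U))
    (r3 : V * P = ω⁻¹ • (P * V)) (r4 : V * Q = ω • (Q * V)) :
    ∑ i : Fin 4, ∑ j : Fin 4, (Z i * Z j - Z j * Z i)^2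
      = (s^4 * (16 * ((1-ω)^2 * ω⁻¹ + (1-ω⁻¹)^2 * ω))) • 1 := by
  have h1' : ∀ x : A, P * (Q * x) = x := fun x => by rw [← mul_assoc, h1, one_mul]
  have h2' : ∀ x : A, Q * (P * x) = x := fun x => by rw [← mul_assoc, h2, one_mul]
  have h3' : ∀ x : A, U * (V * x) = x := fun x => by rw [← mul_assoc, h3, one_mul]
  have h4' : ∀ x : A, V * (U * x) = x := fun x => by rw [← mul_assoc, h4, one_mul]
  have r1' : ∀ x : A, U * (P * x) = ω • (P * (U * x)) := fun x => by
    rw [← mul_assoc, r1, smul_mul_assoc, mul_assoc]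
  have r2' : ∀ x : A, U * (Q * x) = ω⁻¹ • (Q * (U * x)) := fun x => by
    rw [← mul_assoc, r2, smul_mul_assoc, mul_assoc]
  have r3' : ∀ x : A, V * (P * x) = ω⁻¹ • (P * (V * x)) := fun x => by
    rw [← mul_assoc, r3, smul_mul_assoc, mul_assoc]
  have r4' : ∀ x : A, V * (Q * x) = ω • (Q * (V * x)) := fun x => by
    rw [← mul_assoc, r4, smul_mul_assoc, mul_assoc]
  simp only [Fin.sum_univ_four, hZ0, hZ1, hZ2, hZ3]
  simp only [pow_two, mul_add, add_mul, mul_sub, sub_mul, smul_add, smul_sub, smul_smul,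
    mul_smul_comm, smul_mul_assoc, mul_assoc, mul_one, one_mul,
    h1, h2, h3, h4, h1', h2', h3', h4', r1, r2, r3, r4, r1', r2', r3', r4']
  match_scalars <;> ring_nf <;> simp [Complex.I_sq] <;> ring_nf

/-- The fuzzy Clifford torus: with `X¹,…,X⁴` built from the clock and shift
matrices and `ℏ = sin(π/N)`, one has `hg = ω gh`, `[X¹,X²] = 0 = [X³,X⁴]`, and
`−ℏ⁻² ∑_{i,j} [Xⁱ,Xʲ]² = 2·1`. -/
theorem fuzzy_torus_commutators (N : ℕ) (hN : 1 < N) :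
    (shift N * clock N =
      Complex.exp (2 * Real.pi * Complex.I / N) • (clock N * shift N)) ∧
    (∀ X : Fin 4 → Matrix (Fin N) (Fin N) ℂ,
      X 0 = (2 * Real.sqrt 2 : ℂ)⁻¹ • ((clock N)ᴴ + clock N) →
      X 1 = ((2 * Real.sqrt 2 : ℂ)⁻¹ * Complex.I) • ((clock N)ᴴ - clock N) →
      X 2 = (2 * Real.sqrt 2 : ℂ)⁻¹ • ((shift N)ᴴ + shift N) →
      X 3 = ((2 * Real.sqrt 2 : ℂ)⁻¹ * Complex.I) • ((shift N)ᴴ - shift N) →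
        (X 0 * X 1 - X 1 * X 0 = 0) ∧
        (X 2 * X 3 - X 3 * X 2 = 0) ∧
        (-(((Real.sin (Real.pi / N) : ℂ) ^ 2)⁻¹) •
            ∑ i : Fin 4, ∑ j : Fin 4,
              (X i * X j - X j * X i) ^ 2 =
          (2 : ℂ) • (1 : Matrix (Fin N) (Fin N) ℂ))) := by
  have hN0 : (N:ℂ) ≠ 0 := Nat.cast_ne_zero.mpr (by omega)
  set ω : ℂ := Complex.exp (2 * Real.pi * Complex.I / N) with hω
  have hω0 : ω ≠ 0 := Complex.exp_ne_zero _
  have hωN : ω ^ N = 1 := by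
    rw [hω, ← Complex.exp_nat_mul]
    rw [show (N:ℂ) * (2 * Real.pi * Complex.I / N) = 2 * Real.pi * Complex.I by field_simp]
    exact Complex.exp_two_pi_mul_I
  have hstarω : (starRingEnd ℂ) ω = ω⁻¹ := by
    rw [hω, ← Complex.exp_conj, ← Complex.exp_neg]
    congr 1
    simp [map_div₀, Complex.conj_I, map_ofNat]
    ring
  have hstar1 : ω * (starRingEnd ℂ) ω = 1 := by
    rw [hstarω]; exact mul_inv_cancel₀ hω0
  have : NeZero N := ⟨by omega⟩
  have v1 : ((1 : Fin N) : ℕ) = 1 := by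
    rw [Fin.val_one']; exact Nat.mod_eq_of_lt hN
  have vadd : ∀ k : Fin N, ((k + 1 : Fin N) : ℕ) = ((k : ℕ) + 1) % N := by
    intro k; rw [Fin.val_add, v1]
  have dsucc : ∀ k : Fin N, ω ^ ((k + 1 : Fin N) : ℕ) = ω * ω ^ (k : ℕ) := by
    intro k; rw [vadd, ← pow_eq_pow_mod _ hωN, pow_succ, mul_comm]
  have dsucc' : ∀ k : Fin N, ((starRingEnd ℂ) ω) ^ ((k + 1 : Fin N) : ℕ)
      = ω⁻¹ * ((starRingEnd ℂ) ω) ^ (k : ℕ) := by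
    intro k; rw [← map_pow, dsucc, map_mul, map_pow, hstarω]
  have hsh : ∀ k l : Fin N, shift N k l = if l = k + 1 then (1:ℂ) else 0 := by
    intro k l
    show (if (l:ℕ) = ((k:ℕ)+1) % N then (1:ℂ) else 0) = _
    refine if_congr ?_ rfl rfl
    rw [← vadd]; exact Fin.val_eq_val l (k+1)
  have hGH : (clock N)ᴴ = Matrix.diagonal (fun k : Fin N =>
      ((starRingEnd ℂ) ω) ^ (k : ℕ)) := by
    rw [clock, Matrix.diagonal_conjTranspose]
    have : (star fun k : Fin N => Complex.exp (2 * Real.pi * Complex.I / N) ^ (k : ℕ))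
        = fun k : Fin N => ((starRingEnd ℂ) ω) ^ (k : ℕ) := funext fun k => star_pow _ _
    rw [this]
  have uG : clock N * (clock N)ᴴ = 1 := by
    rw [hGH, clock, Matrix.diagonal_mul_diagonal, ← Matrix.diagonal_one]
    have : (fun i : Fin N => Complex.exp (2 * Real.pi * Complex.I / N) ^ (i : ℕ) *
        ((starRingEnd ℂ) ω) ^ (i : ℕ)) = fun _ : Fin N => (1:ℂ) := by
      funext k
      rw [← hω, ← mul_pow, hstar1, one_pow]
    rw [this]
  have uG' : (clock N)ᴴ * clock N = 1 := mul_eq_one_comm.mp uG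
  have uH : shift N * (shift N)ᴴ = 1 := by
    ext k l
    simp only [Matrix.mul_apply, Matrix.conjTranspose_apply, hsh, Matrix.one_apply,
      apply_ite (starRingEnd ℂ), map_one, map_zero, ite_mul, one_mul, zero_mul,
      mul_ite, mul_one, mul_zero]
    simp [Finset.sum_ite_eq', add_left_inj]
  have uH' : (shift N)ᴴ * shift N = 1 := mul_eq_one_comm.mp uH
  have r1 : shift N * clock N = ω • (clock N * shift N) := by
    ext k l
    simp only [clock, Matrix.mul_diagonal, Matrix.diagonal_mul, Matrix.smul_apply,
      hsh, smul_eq_mul, ← hω]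
    by_cases h : l = k + 1
    · subst h; simp [dsucc k]
    · simp [h]
  have r2 : shift N * (clock N)ᴴ = ω⁻¹ • ((clock N)ᴴ * shift N) := by
    ext k l
    simp only [hGH, Matrix.mul_diagonal, Matrix.diagonal_mul, Matrix.smul_apply,
      hsh, smul_eq_mul]
    by_cases h : l = k + 1
    · subst h; simp [dsucc' k]
    · simp [h]
  have r3 : (shift N)ᴴ * clock N = ω⁻¹ • (clock N * (shift N)ᴴ) := by
    ext k l
    simp only [clock, Matrix.mul_diagonal, Matrix.diagonal_mul, Matrix.smul_apply,
      Matrix.conjTranspose_apply, hsh, smul_eq_mul, ← hω,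
      apply_ite (starRingEnd ℂ), map_one, map_zero]
    by_cases h : k = l + 1
    · subst h
      simp [dsucc l, ← mul_assoc, inv_mul_cancel₀ hω0]
    · simp [h]
  have r4 : (shift N)ᴴ * (clock N)ᴴ = ω • ((clock N)ᴴ * (shift N)ᴴ) := by
    ext k l
    simp only [hGH, Matrix.mul_diagonal, Matrix.diagonal_mul, Matrix.smul_apply,
      Matrix.conjTranspose_apply, hsh, smul_eq_mul,
      apply_ite (starRingEnd ℂ), map_one, map_zero]
    by_cases h : k = l + 1
    · subst h
      simp [dsucc' l, ← mul_assoc, mul_inv_cancel₀ hω0]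
    · simp [h]
  refine ⟨r1, fun X hX0 hX1 hX2 hX3 => ?_⟩
  refine ⟨?_, ?_, ?_⟩
  · rw [hX0, hX1]
    simp only [mul_smul_comm, smul_mul_assoc, mul_add, add_mul, mul_sub, sub_mul,
      smul_add, smul_sub, smul_smul, uG, uG']
    module
  · rw [hX2, hX3]
    simp only [mul_smul_comm, smul_mul_assoc, mul_add, add_mul, mul_sub, sub_mul,
      smul_add, smul_sub, smul_smul, uH, uH']
    module
  · have hsum := fuzzy_aux (clock N) ((clock N)ᴴ) (shift N) ((shift N)ᴴ) ω
      ((2 * Real.sqrt 2 : ℂ)⁻¹) X hX0 hX1 hX2 hX3 uG uG' uH uH' r1 r2 r3 r4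
    rw [hsum, smul_smul]
    -- trig facts
    have hsin_pos : 0 < Real.sin (Real.pi / N) :=
      Real.sin_pos_of_pos_of_lt_pi (by positivity)
        (div_lt_self Real.pi_pos (by exact_mod_cast hN))
    have hS0 : ((Real.sin (Real.pi / N) : ℝ) : ℂ) ≠ 0 := by
      exact_mod_cast hsin_pos.ne'
    have hcos : ω + ω⁻¹ = 2 - 4 * ((Real.sin (Real.pi / N) : ℝ) : ℂ)^2 := by
      have hz : (2 * (Real.pi:ℂ) * Complex.I / N) = ((2 * Real.pi / N : ℝ) : ℂ) * Complex.I := by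
        push_cast; ring
      rw [hω, ← Complex.exp_neg, hz, ← neg_mul,
        show (-((2 * Real.pi / N : ℝ):ℂ)) = ((-(2 * Real.pi / N) : ℝ) : ℂ) by push_cast; ring,
        Complex.exp_mul_I, Complex.exp_mul_I,
        ← Complex.ofReal_cos, ← Complex.ofReal_sin, ← Complex.ofReal_cos, ← Complex.ofReal_sin,
        Real.cos_neg, Real.sin_neg]
      have hc2 : Real.cos (2 * Real.pi / N) = 1 - 2 * Real.sin (Real.pi / N)^2 := by
        rw [show 2 * Real.pi / N = 2 * (Real.pi / N) by ring]
        nlinarith [Real.cos_two_mul (Real.pi / N), Real.sin_sq_add_cos_sq (Real.pi / N)]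
      rw [hc2]
      push_cast
      ring
    have hsqrt : ((2:ℂ) * (Real.sqrt 2 : ℝ))^4 = 64 := by
      rw [show ((2:ℂ) * ((Real.sqrt 2:ℝ):ℂ))^4 = 16 * ((((Real.sqrt 2:ℝ)):ℂ)^2)^2 by ring,
        show (((Real.sqrt 2:ℝ)):ℂ)^2 = ((Real.sqrt 2 ^ 2 : ℝ) : ℂ) by push_cast; ring,
        Real.sq_sqrt (by norm_num : (0:ℝ) ≤ 2)]
      norm_num
    have hcc : (1-ω)^2 * ω⁻¹ + (1-ω⁻¹)^2 * ω = 2*(ω+ω⁻¹) - 4 := by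
      field_simp
      ring
    congr 1
    rw [inv_pow, hsqrt, hcc, hcos]
    have h2 : ((Real.sin (Real.pi / N) : ℝ) : ℂ)^2 ≠ 0 := pow_ne_zero 2 hS0
    rw [show ((64:ℂ))⁻¹ * (16 * (2 * (2 - 4 * ((Real.sin (Real.pi / N) : ℝ) : ℂ)^2) - 4))
        = -2 * ((Real.sin (Real.pi / N) : ℝ) : ℂ)^2 by ring]
    rw [show -((((Real.sin (Real.pi / N) : ℝ) : ℂ))^2)⁻¹ *
        (-2 * ((Real.sin (Real.pi / N) : ℝ) : ℂ)^2)
        = 2 * (((Real.sin (Real.pi / N) : ℝ) : ℂ)^2 * ((((Real.sin (Real.pi / N) : ℝ) : ℂ))^2)⁻¹)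
        by ring]
    rw [mul_inv_cancel₀ h2, mul_one]
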